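/- Let K be a commutative ring, P a finite poset, V ⊆ P a cosieve with inclusion v : V ↪ P, and Z ⊆ P a subposet with inclusion i : Z ↪ P; let v' : V∩Z ↪ Z and i' : V∩Z ↪ V denote the induced inclusions (V∩Z is a cosieve in Z). Then the canonical base-change morphism (v')_! (i')^* → i^* v_!, obtained from the units and counits of the adjunctions (v_!, v^*) and (v'_!, v'^*), is an isomorphism of functors (K-Mod)^V → (K-Mod)^Z. -/

import Mathlib

open CategoryTheory CategoryTheory.Limits

universe u

variable (K : Type u) [CommRing K] (P : Type u) [PartialOrder P]

/-- The inclusion functor of a subposet (a subset of `P` with the induced order). -/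
def inclFunctor (V : Set P) : (↥V) ⥤ P :=
  (Subtype.mono_coe (· ∈ V)).functor

/-- The inclusion functor `V ∩ Z ↪ Z`. -/
def inclInterLeft (V Z : Set P) : (↥(V ∩ Z)) ⥤ (↥Z) :=
  Monotone.functor (f := fun w => (⟨w.1, w.2.2⟩ : Z)) fun _ _ h => h

/-- The inclusion functor `V ∩ Z ↪ V`. -/
def inclInterRight (V Z : Set P) : (↥(V ∩ Z)) ⥤ (↥V) :=
  Monotone.functor (f := fun w => (⟨w.1, w.2.1⟩ : V)) fun _ _ h => h

lemma incl_comm (V Z : Set P) :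
    inclInterRight P V Z ⋙ inclFunctor P V = inclInterLeft P V Z ⋙ inclFunctor P Z :=
  CategoryTheory.Functor.ext (fun _ => rfl) (fun _ _ _ => Subsingleton.elim _ _)

/-- The canonical base-change morphism `(v')_! (i')^* G → i^* v_! G`, obtained from the
units and counits of the adjunctions `(v_!, v^*)` and `((v')_!, (v')^*)` (it is the
adjunction transpose of the whiskering of the unit `G → v^* v_! G`). -/
noncomputable def baseChange (V Z : Set P) (G : (↥V) ⥤ ModuleCat.{u} K) :
    (inclInterLeft P V Z).lan.obj (inclInterRight P V Z ⋙ G) ⟶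
      inclFunctor P Z ⋙ ((inclFunctor P V).lan.obj G) :=
  (((inclInterLeft P V Z).lanAdjunction (ModuleCat.{u} K)).homEquiv
      (inclInterRight P V Z ⋙ G) (inclFunctor P Z ⋙ ((inclFunctor P V).lan.obj G))).symm
    (Functor.whiskerLeft (inclInterRight P V Z)
        (((inclFunctor P V).lanAdjunction (ModuleCat.{u} K)).unit.app G) ≫
      eqToHom (show inclInterRight P V Z ⋙ (inclFunctor P V ⋙ (inclFunctor P V).lan.obj G)
            = inclInterLeft P V Z ⋙ (inclFunctor P Z ⋙ (inclFunctor P V).lan.obj G) by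
          rw [← Functor.assoc, ← Functor.assoc, incl_comm]))

section Aux

variable {J C : Type*} [Category J] [Category C]

/-- A cocone over a diagram indexed by an empty category whose point is initial is a colimit. -/
def isColimitOfIsEmpty [IsEmpty J] {F : J ⥤ C} (c : Cocone F) (h : IsInitial c.pt) :
    IsColimit c where
  desc s := h.to s.pt
  fac s j := isEmptyElim j
  uniq s m _ := h.hom_ext _ _

/-- The point of a colimit cocone over an empty diagram is initial. -/
def isInitialOfIsColimitEmpty [IsEmpty J] {F : J ⥤ C} {c : Cocone F} (hc : IsColimit c) :
    IsInitial c.pt :=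
  IsInitial.ofUniqueHom
    (fun Y => hc.desc ⟨Y, ⟨isEmptyElim, fun j => isEmptyElim j⟩⟩)
    (fun Y m => hc.uniq ⟨Y, ⟨isEmptyElim, fun j => isEmptyElim j⟩⟩ m (fun j => isEmptyElim j))

/-- A cocone over a diagram whose index category has a terminal object is a colimit as soon
as its leg at the terminal object is an isomorphism. -/
noncomputable def isColimitOfIsTerminalOfIsIso {F : J ⥤ C} (c : Cocone F) {X : J} (tX : IsTerminal X)
    [IsIso (c.ι.app X)] : IsColimit c :=
  (colimitOfDiagramTerminal tX F).ofIsoColimit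
    (Cocones.ext (asIso (c.ι.app X)) (fun j => c.w (tX.from j)))

end Aux

instance (V : Set P) : (inclFunctor P V).Faithful where
  map_injective _ := Subsingleton.elim _ _

instance (V : Set P) : (inclFunctor P V).Full where
  map_surjective f := ⟨homOfLE (leOfHom f), Subsingleton.elim _ _⟩

/-- Let `V ⊆ P` be a cosieve in a finite poset `P` and `Z ⊆ P` any
subposet (so that `V ∩ Z` is a cosieve in `Z`).  Then the canonical base-change morphism
`(v')_! (i')^* → i^* v_!` is an isomorphism of functors `(K-Mod)^V → (K-Mod)^Z`. -/
theorem statement_15 [Fintype P] (V : Set P)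
    (hV : ∀ ⦃a b : P⦄, a ≤ b → a ∈ V → b ∈ V) (Z : Set P) :
    ∀ G : (↥V) ⥤ ModuleCat.{u} K, IsIso (baseChange K P V Z G) := by
  intro G
  set β : inclInterRight P V Z ⋙ G ⟶
      inclInterLeft P V Z ⋙ (inclFunctor P Z ⋙ ((inclFunctor P V).lan.obj G)) :=
    Functor.whiskerLeft (inclInterRight P V Z)
        (((inclFunctor P V).lanAdjunction (ModuleCat.{u} K)).unit.app G) ≫
      eqToHom (show inclInterRight P V Z ⋙ (inclFunctor P V ⋙ (inclFunctor P V).lan.obj G)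
            = inclInterLeft P V Z ⋙ (inclFunctor P Z ⋙ (inclFunctor P V).lan.obj G) by
          rw [← Functor.assoc, ← Functor.assoc, incl_comm]) with hβdef
  have hβ : (inclInterLeft P V Z).lanUnit.app (inclInterRight P V Z ⋙ G) ≫
      Functor.whiskerLeft (inclInterLeft P V Z) (baseChange K P V Z G) = β := by
    rw [← Functor.lanAdjunction_unit]
    exact (Adjunction.homEquiv_unit
        (adj := (inclInterLeft P V Z).lanAdjunction (ModuleCat.{u} K))
        (f := baseChange K P V Z G)).symm.trans (Equiv.apply_symm_apply _ _)
  have hpt : (Functor.LeftExtension.mk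
      (inclFunctor P Z ⋙ ((inclFunctor P V).lan.obj G)) β).IsPointwiseLeftKanExtension := by
    intro z
    by_cases hz : z.1 ∈ V
    · -- the comma category has a terminal object given by `z` itself
      have tX : IsTerminal (CostructuredArrow.mk
          (show (inclInterLeft P V Z).obj ⟨z.1, ⟨hz, z.2⟩⟩ ⟶ z from 𝟙 z)) :=
        IsTerminal.ofUniqueHom
          (fun g => CostructuredArrow.homMk
            (homOfLE (show (g.left : P) ≤ z.1 from leOfHom g.hom))
            (Subsingleton.elim _ _))
          (fun g m => by
            apply CostructuredArrow.hom_ext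
            exact Subsingleton.elim _ _)
      have : IsIso (((Functor.LeftExtension.mk
          (inclFunctor P Z ⋙ ((inclFunctor P V).lan.obj G)) β).coconeAt z).ι.app
            (CostructuredArrow.mk
              (show (inclInterLeft P V Z).obj ⟨z.1, ⟨hz, z.2⟩⟩ ⟶ z from 𝟙 z))) := by
        haveI h1 : IsIso (β.app ⟨z.1, ⟨hz, z.2⟩⟩) := by
          rw [hβdef]
          simp only [NatTrans.comp_app, Functor.whiskerLeft_app, eqToHom_app]
          infer_instance
        haveI h2 : IsIso (CostructuredArrow.mk
            (show (inclInterLeft P V Z).obj ⟨z.1, ⟨hz, z.2⟩⟩ ⟶ z from 𝟙 z)).hom :=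
          ⟨⟨𝟙 z, Subsingleton.elim _ _, Subsingleton.elim _ _⟩⟩
        simp only [Functor.LeftExtension.coconeAt_ι_app]
        exact IsIso.comp_isIso' h1 (Functor.map_isIso _ _)
      exact isColimitOfIsTerminalOfIsIso _ tX
    · have h1 : IsEmpty (CostructuredArrow (inclInterLeft P V Z) z) :=
        ⟨fun g => hz (hV (show (g.left : P) ≤ z.1 from leOfHom g.hom) g.left.2.1)⟩
      have h2 : IsEmpty (CostructuredArrow (inclFunctor P V) (z.1 : P)) :=
        ⟨fun g => hz (hV (leOfHom g.hom) g.left.2)⟩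
      have hE : IsColimit ((Functor.LeftExtension.mk ((inclFunctor P V).leftKanExtension G)
          ((inclFunctor P V).leftKanExtensionUnit G)).coconeAt (z.1 : P)) :=
        Functor.isPointwiseLeftKanExtensionLeftKanExtensionUnit (inclFunctor P V) G z.1
      have hI : IsInitial ((inclFunctor P Z ⋙ (inclFunctor P V).lan.obj G).obj z) :=
        isInitialOfIsColimitEmpty hE
      exact isColimitOfIsEmpty _ hI
  have hext : (inclFunctor P Z ⋙ ((inclFunctor P V).lan.obj G)).IsLeftKanExtension β :=
    hpt.isLeftKanExtension
  exact (Functor.isLeftKanExtension_iff_isIso (baseChange K P V Z G)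
    ((inclInterLeft P V Z).lanUnit.app (inclInterRight P V Z ⋙ G)) β hβ).mp hext
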